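/- arXiv:1907.03672 — 2 statements merged into one kernel-verified Lean document; each statement's English description precedes it below -/
import Mathlib

section
/- The catenoid is the only minimal surface of revolution (Euler): if I ⊆ ℝ is an open interval and f : I → ℝ is a positive C² function satisfying the minimal-surface-of-revolution equation f(x)·f''(x) = 1 + (f'(x))² for all x ∈ I, then there exist constants c > 0 and b ∈ ℝ such that f(x) = c·cosh((x − b)/c) for all x ∈ I. -/
private theorem const_aux {s : Set ℝ} (hs : Convex ℝ s) (hso : IsOpen s) {g : ℝ → ℝ}
    (hg : ∀ x ∈ s, HasDerivAt g 0 x) {x y : ℝ} (hx : x ∈ s) (hy : y ∈ s) : g x = g y := by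
  refine hs.is_const_of_fderivWithin_eq_zero
    (fun z hz => (hg z hz).differentiableAt.differentiableWithinAt) (fun z hz => ?_) hx hy
  have h := hg z hz
  rw [hasDerivAt_iff_hasFDerivAt] at h
  rw [fderivWithin_of_isOpen hso hz, h.fderiv]
  apply ContinuousLinearMap.ext; intro v
  simp

/-- **The catenoid is the only minimal surface of revolution** (Euler): a positive C² solution of
`f·f'' = 1 + (f')²` on an open interval is a catenary `f(x) = c·cosh((x − b)/c)`. -/
theorem catenoid_unique_minimal_surface_of_revolution
    (I : Set ℝ) (hI : IsOpen I) (hI' : I.OrdConnected)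
    (f : ℝ → ℝ) (hf : ContDiffOn ℝ 2 f I)
    (hpos : ∀ x ∈ I, 0 < f x)
    (hode : ∀ x ∈ I, f x * deriv (deriv f) x = 1 + (deriv f x) ^ 2) :
    ∃ c > (0 : ℝ), ∃ b : ℝ, ∀ x ∈ I, f x = c * Real.cosh ((x - b) / c) := by
  rcases I.eq_empty_or_nonempty with hIe | ⟨x₀, hx₀⟩
  · exact ⟨1, one_pos, 0, fun x hx => absurd hx (hIe ▸ Set.notMem_empty x)⟩
  have hconv : Convex ℝ I := hI'.convex
  have hf1 : ∀ x ∈ I, HasDerivAt f (deriv f x) x := fun x hx =>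
    ((hf.contDiffAt (hI.mem_nhds hx)).differentiableAt two_ne_zero).hasDerivAt
  have hfd : ContDiffOn ℝ 1 (deriv f) I := hf.deriv_of_isOpen hI (by norm_num)
  have hf2 : ∀ x ∈ I, HasDerivAt (deriv f) (deriv (deriv f) x) x := fun x hx =>
    ((hfd.contDiffAt (hI.mem_nhds hx)).differentiableAt one_ne_zero).hasDerivAt
  set s : ℝ → ℝ := fun x => Real.sqrt (1 + deriv f x ^ 2) with hs_def
  have hs_pos : ∀ x, 0 < s x := fun x => Real.sqrt_pos.2 (by positivity)
  have hs_sq : ∀ x, s x ^ 2 = 1 + deriv f x ^ 2 := fun x => Real.sq_sqrt (by positivity)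
  have hsd : ∀ x ∈ I, HasDerivAt s (deriv f x * deriv (deriv f) x / s x) x := by
    intro x hx
    have h1 : HasDerivAt (fun y => 1 + deriv f y ^ 2)
        (2 * deriv f x * deriv (deriv f) x) x := by
      simpa [mul_comm, mul_assoc, mul_left_comm] using ((hf2 x hx).pow 2).const_add 1
    have h2 := h1.sqrt (by positivity)
    convert h2 using 1
    have := (hs_pos x).ne'
    rw [hs_def]
    field_simp
  set G : ℝ → ℝ := fun x => f x / s x with hG_def
  have hGd : ∀ x ∈ I, HasDerivAt G 0 x := by
    intro x hx
    have h := (hf1 x hx).div (hsd x hx) (hs_pos x).ne'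
    refine h.congr_deriv (Eq.symm ?_)
    have hsne := (hs_pos x).ne'
    field_simp
    linear_combination deriv f x * (hode x hx) - deriv f x * (hs_sq x)
  set c : ℝ := G x₀ with hc
  have hcpos : 0 < c := div_pos (hpos x₀ hx₀) (hs_pos x₀)
  have hGc : ∀ x ∈ I, f x = c * s x := by
    intro x hx
    have h : G x = c := const_aux hconv hI hGd hx hx₀
    rw [hG_def] at h
    field_simp at h
    rw [div_eq_iff (hs_pos x).ne'] at h
    linarith [h]
  set b : ℝ := x₀ - c * Real.arsinh (deriv f x₀) with hb
  refine ⟨c, hcpos, b, fun x hx => ?_⟩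
  have hφ : ∀ x ∈ I, HasDerivAt (fun y => Real.arsinh (deriv f y) - y / c) 0 x := by
    intro x hx
    have h1 := (Real.hasDerivAt_arsinh (deriv f x)).comp x (hf2 x hx)
    have h2 := h1.sub ((hasDerivAt_id x).div_const c)
    refine h2.congr_deriv (Eq.symm ?_)
    have hf'' : deriv (deriv f) x = s x / c := by
      have h3 := hode x hx
      rw [hGc x hx, ← hs_sq x] at h3
      field_simp at h3 ⊢
      nlinarith [h3, hs_pos x, hcpos]
    rw [hf'']
    have := (hs_pos x).ne'
    field_simp [hs_def]
    simp [s]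
  have harsinh : Real.arsinh (deriv f x) = (x - b) / c := by
    have h := const_aux hconv hI hφ hx hx₀
    rw [hb]
    field_simp at h ⊢
    linarith [h]
  have hf' : deriv f x = Real.sinh ((x - b) / c) := by
    rw [← harsinh, Real.sinh_arsinh]
  rw [hGc x hx, hs_def]
  simp only [hf']
  rw [← Real.cosh_sq', Real.sqrt_sq (Real.cosh_pos _).le]
end

section
/- Area growth of the stable minimal complex curves z ↦ (z, z^m): for every integer m ≥ 1, let Σ_m = {(z, z^m) : z ∈ ℂ} ⊆ ℂ² ≅ ℝ⁴. Then for every r ≥ √2, the 2-dimensional Hausdorff measure of Σ_m intersected with the closed Euclidean ball of radius r centered at the origin satisfies ℋ²(Σ_m ∩ B̄_r) ≥ (π/2)·m·r². In particular, there is no uniform quadratic area bound for complex curves in ℝ⁴ that are topologically planes. -/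
open MeasureTheory Real

/-- The complex curve `Σ_m = {(z, zᵐ) : z ∈ ℂ}`, viewed as a subset of Euclidean `ℝ⁴ ≅ ℂ²` via
`(z, w) ↦ (Re z, Im z, Re w, Im w)`. -/
def SigmaCurve (m : ℕ) : Set (EuclideanSpace ℝ (Fin 4)) :=
  {p | ∃ z : ℂ, p = (WithLp.equiv 2 (Fin 4 → ℝ)).symm ![z.re, z.im, (z ^ m).re, (z ^ m).im]}

noncomputable def rootm (m : ℕ) (w : ℂ) : ℂ :=
  ((‖w‖ ^ ((m : ℝ)⁻¹) : ℝ) : ℂ) * Complex.exp ((w.arg / m : ℝ) * Complex.I)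

lemma rootm_pow {m : ℕ} (hm : m ≠ 0) (w : ℂ) : rootm m w ^ m = w := by
  have hm' : (m : ℝ) ≠ 0 := Nat.cast_ne_zero.mpr hm
  rw [rootm, mul_pow, ← Complex.exp_nat_mul]
  have h1 : (((‖w‖ ^ ((m : ℝ)⁻¹) : ℝ)) : ℂ) ^ m
      = ((‖w‖ : ℝ) : ℂ) := by
    norm_cast
    rw [← Real.rpow_natCast (‖w‖ ^ ((m : ℝ)⁻¹)) m,
      ← Real.rpow_mul (norm_nonneg w)]
    field_simp
    simp
  have h2 : (m : ℂ) * (((w.arg / m : ℝ)) * Complex.I) = w.arg * Complex.I := by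
    push_cast
    field_simp
  rw [h1, h2, Complex.norm_mul_exp_arg_mul_I]

lemma abs_rootm (m : ℕ) (w : ℂ) :
    ‖rootm m w‖ = ‖w‖ ^ ((m : ℝ)⁻¹) := by
  rw [rootm, norm_mul, Complex.norm_exp_ofReal_mul_I, mul_one, Complex.norm_real, Real.norm_eq_abs,
    abs_of_nonneg (Real.rpow_nonneg (norm_nonneg w) _)]

lemma continuousOn_rootm {m : ℕ} (hm : m ≠ 0) :
    ContinuousOn (rootm m) Complex.slitPlane := by
  intro w hw
  apply ContinuousAt.continuousWithinAt
  apply ContinuousAt.mul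
  · apply Complex.continuous_ofReal.continuousAt.comp
    exact (Real.continuousAt_rpow_const _ _
      (Or.inr (by positivity))).comp continuous_norm.continuousAt
  · apply Complex.continuous_exp.continuousAt.comp
    apply ContinuousAt.mul ?_ continuousAt_const
    apply Complex.continuous_ofReal.continuousAt.comp
    exact (Complex.continuousAt_arg hw).div continuousAt_const (Nat.cast_ne_zero.mpr hm)

noncomputable def Fc (m : ℕ) (z : ℂ) : EuclideanSpace ℝ (Fin 4) :=
  (WithLp.equiv 2 (Fin 4 → ℝ)).symm ![z.re, z.im, (z ^ m).re, (z ^ m).im]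

lemma Fc_apply (m : ℕ) (z : ℂ) (i : Fin 4) :
    Fc m z i = ![z.re, z.im, (z ^ m).re, (z ^ m).im] i := rfl

lemma Fc_inj (m : ℕ) : Function.Injective (Fc m) := by
  intro z w h
  have h0 := congrArg (fun p => p 0) h
  have h1 := congrArg (fun p => p 1) h
  simp only [Fc_apply] at h0 h1
  apply Complex.ext <;> simpa using ‹_›

lemma continuous_Fc (m : ℕ) : Continuous (Fc m) := by
  unfold Fc
  refine Continuous.comp ?_ ?_
  · exact (PiLp.continuous_toLp 2 (fun _ : Fin 4 => ℝ))
  · apply continuous_pi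
    intro i
    fin_cases i <;> simp <;> fun_prop

lemma Fc_mem_closedBall {m : ℕ} {z : ℂ} {t r : ℝ} (hr : 0 ≤ r)
    (h1 : ‖z‖ ≤ t) (h2 : ‖z ^ m‖ ≤ t) (ht : 2 * t ^ 2 ≤ r ^ 2) :
    Fc m z ∈ Metric.closedBall (0 : EuclideanSpace ℝ (Fin 4)) r := by
  rw [Metric.mem_closedBall, dist_zero_right]
  have ht0 : 0 ≤ t := (norm_nonneg z).trans h1
  have hnorm : ‖Fc m z‖ ^ 2 ≤ r ^ 2 := by
    rw [EuclideanSpace.norm_eq, Real.sq_sqrt (by positivity)]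
    have : ∑ i : Fin 4, ‖Fc m z i‖ ^ 2
        = ‖z‖ ^ 2 + ‖z ^ m‖ ^ 2 := by
      rw [Complex.sq_norm, Complex.sq_norm, Complex.normSq_apply, Complex.normSq_apply]
      simp [Fin.sum_univ_four, Fc_apply, Real.norm_eq_abs, sq_abs]
      ring
    rw [this]
    calc ‖z‖ ^ 2 + ‖z ^ m‖ ^ 2 ≤ t ^ 2 + t ^ 2 := by
          gcongr
      _ ≤ r ^ 2 := by linarith
  nlinarith [norm_nonneg (Fc m z)]

noncomputable def Pmap (p : EuclideanSpace ℝ (Fin 4)) : ℝ × ℝ := (p 2, p 3)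

lemma lipschitz_Pmap : LipschitzWith 1 Pmap := by
  apply LipschitzWith.of_dist_le_mul
  intro p q
  rw [NNReal.coe_one, one_mul, Prod.dist_eq]
  have key : ∀ i : Fin 4, dist (p i) (q i) ≤ dist p q := by
    intro i
    rw [EuclideanSpace.dist_eq]
    rw [show dist (p i) (q i) = Real.sqrt (dist (p i) (q i) ^ 2) from
      (Real.sqrt_sq dist_nonneg).symm]
    apply Real.sqrt_le_sqrt
    exact Finset.single_le_sum (f := fun j => dist (p j) (q j) ^ 2)
      (fun j _ => sq_nonneg _) (Finset.mem_univ i)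
  exact max_le (key 2) (key 3)

lemma volume_im_zero : volume {z : ℂ | z.im = 0} = 0 := by
  have h : {z : ℂ | z.im = 0}
      = Complex.measurableEquivRealProd ⁻¹' (Set.univ ×ˢ ({0} : Set ℝ)) := by
    ext z
    simp only [Set.mem_setOf_eq, Set.mem_preimage, Set.mem_prod, Set.mem_univ, true_and,
      Set.mem_singleton_iff]
    exact Iff.rfl
  rw [h, Complex.volume_preserving_equiv_real_prod.measure_preimage
    (MeasurableSet.univ.prod (measurableSet_singleton 0)).nullMeasurableSet,
    Measure.volume_eq_prod ℝ ℝ, Measure.prod_prod]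
  simp


/-- **Area growth of the stable minimal complex curves `z ↦ (z, zᵐ)`**: for every `m ≥ 1` and
every `r ≥ √2`, the 2-dimensional Hausdorff measure of `Σ_m` inside the closed Euclidean ball of
radius `r` about the origin is at least `(π/2)·m·r²`. -/
theorem area_growth_of_complex_curves (m : ℕ) (hm : 1 ≤ m) (r : ℝ) (hr : Real.sqrt 2 ≤ r) :
    ENNReal.ofReal (π / 2 * m * r ^ 2) ≤
      μH[2] (SigmaCurve m ∩ Metric.closedBall (0 : EuclideanSpace ℝ (Fin 4)) r) := by
  have hm0 : m ≠ 0 := by omega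
  have hs2 : (0:ℝ) < Real.sqrt 2 := Real.sqrt_pos.mpr (by norm_num)
  set t : ℝ := r / Real.sqrt 2 with ht_def
  have ht1 : 1 ≤ t := by
    rw [ht_def, le_div_iff₀ hs2]; simpa using hr
  have ht0 : 0 < t := lt_of_lt_of_le one_pos ht1
  have ht2 : 2 * t ^ 2 = r ^ 2 := by
    rw [ht_def, div_pow, Real.sq_sqrt (by norm_num : (0:ℝ) ≤ 2)]
    field_simp
  have hr0 : 0 ≤ r := (Real.sqrt_nonneg 2).trans hr
  set ζ : ℂ := Complex.exp (2 * π * Complex.I / m) with hζ_def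
  have hprim : IsPrimitiveRoot ζ m := Complex.isPrimitiveRoot_exp m hm0
  have hζ_def2 : ζ = Complex.exp (((2 * π / m : ℝ) : ℂ) * Complex.I) := by
    rw [hζ_def]; congr 1; push_cast; ring
  have habsζ : ‖ζ‖ = 1 := by
    rw [hζ_def2, Complex.norm_exp_ofReal_mul_I]
  set D : Set ℂ := Metric.closedBall 0 t ∩ Complex.slitPlane with hD_def
  have hDmeas : MeasurableSet D :=
    measurableSet_closedBall.inter Complex.isOpen_slitPlane.measurableSet
  have hDne0 : ∀ w ∈ D, w ≠ 0 := by
    rintro w ⟨-, hw⟩ rfl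
    simp [Complex.mem_slitPlane_iff] at hw
  set G : ℕ → ℂ → EuclideanSpace ℝ (Fin 4) := fun k w => Fc m (ζ ^ k * rootm m w) with hG_def
  have hGpow : ∀ (k : ℕ) (w : ℂ), (ζ ^ k * rootm m w) ^ m = w := by
    intro k w
    rw [mul_pow, ← pow_mul, mul_comm k m, pow_mul, hprim.pow_eq_one, one_pow, one_mul,
      rootm_pow hm0]
  set A : ℕ → Set (EuclideanSpace ℝ (Fin 4)) := fun k => G k '' D with hA_def
  have hGinj : ∀ k, Set.InjOn (G k) D := by
    intro k w hw w' hw' h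
    have hb : ζ ^ k * rootm m w = ζ ^ k * rootm m w' := Fc_inj m h
    calc w = (ζ ^ k * rootm m w) ^ m := (hGpow k w).symm
      _ = (ζ ^ k * rootm m w') ^ m := by rw [hb]
      _ = w' := hGpow k w'
  have hcont : ∀ k, ContinuousOn (G k) D := by
    intro k
    exact (continuous_Fc m).comp_continuousOn
      (continuousOn_const.mul ((continuousOn_rootm hm0).mono Set.inter_subset_right))
  have hmeasA : ∀ k, MeasurableSet (A k) := fun k =>
    hDmeas.image_of_continuousOn_injOn (hcont k) (hGinj k)
  have habsw : ∀ w ∈ D, ‖w‖ ≤ t := by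
    rintro w ⟨hw, -⟩
    rw [Metric.mem_closedBall, Complex.dist_eq, sub_zero] at hw
    exact hw
  have hsubA : ∀ k, A k ⊆ SigmaCurve m ∩ Metric.closedBall 0 r := by
    rintro k x ⟨w, hw, rfl⟩
    refine ⟨⟨ζ ^ k * rootm m w, rfl⟩, ?_⟩
    apply Fc_mem_closedBall hr0 ?_ ?_ (le_of_eq ht2)
    · rw [norm_mul, norm_pow, habsζ, one_pow, one_mul, abs_rootm]
      calc ‖w‖ ^ ((m:ℝ)⁻¹) ≤ t ^ ((m:ℝ)⁻¹) :=
            Real.rpow_le_rpow (norm_nonneg w) (habsw w hw) (by positivity)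
        _ ≤ t ^ (1:ℝ) := Real.rpow_le_rpow_of_exponent_le ht1
            (by rw [inv_le_one_iff₀]; right; exact_mod_cast hm)
        _ = t := Real.rpow_one t
    · rw [hGpow]
      exact habsw w hw
  -- lower bound for each sheet
  have hvol : volume (Metric.closedBall (0:ℂ) t) = ENNReal.ofReal (π * t ^ 2) := by
    rw [Complex.volume_closedBall, ← ENNReal.ofReal_pow ht0.le,
      ← ENNReal.ofReal_coe_nnreal (p := NNReal.pi), NNReal.coe_real_pi,
      ← ENNReal.ofReal_mul (by positivity)]
    ring_nf
  have hDvol : volume (Metric.closedBall (0:ℂ) t) ≤ volume D := by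
    have hsub2 : Metric.closedBall (0:ℂ) t ⊆ D ∪ {z : ℂ | z.im = 0} := by
      intro z hz
      by_cases h : z ∈ Complex.slitPlane
      · exact Or.inl ⟨hz, h⟩
      · right
        simp only [Complex.mem_slitPlane_iff, not_or, not_lt, ne_eq, not_not] at h
        exact h.2
    calc volume (Metric.closedBall (0:ℂ) t) ≤ volume D + volume {z : ℂ | z.im = 0} :=
          (measure_mono hsub2).trans (measure_union_le _ _)
      _ = volume D := by rw [volume_im_zero, add_zero]
  have hlow : ∀ k, ENNReal.ofReal (π * t ^ 2) ≤ μH[2] (A k) := by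
    intro k
    have himg : Complex.measurableEquivRealProd '' D ⊆ Pmap '' A k := by
      rintro p ⟨w, hw, rfl⟩
      refine ⟨G k w, ⟨w, hw, rfl⟩, ?_⟩
      show ((((ζ ^ k * rootm m w) ^ m).re : ℝ), (((ζ ^ k * rootm m w) ^ m).im : ℝ)) = _
      rw [hGpow]
      rfl
    have hEvol : volume (Complex.measurableEquivRealProd '' D) = volume D := by
      rw [MeasurableEquiv.image_eq_preimage_symm]
      exact (Complex.volume_preserving_equiv_real_prod.symm _).measure_preimage
        hDmeas.nullMeasurableSet
    calc ENNReal.ofReal (π * t ^ 2) = volume (Metric.closedBall (0:ℂ) t) := hvol.symm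
      _ ≤ volume D := hDvol
      _ = volume (Complex.measurableEquivRealProd '' D) := hEvol.symm
      _ = μH[2] (Complex.measurableEquivRealProd '' D) := by
          rw [MeasureTheory.hausdorffMeasure_prod_real]
      _ ≤ μH[2] (Pmap '' A k) := measure_mono himg
      _ ≤ (1:NNReal) ^ (2:ℝ) * μH[2] (A k) :=
          lipschitz_Pmap.hausdorffMeasure_image_le (by norm_num) (A k)
      _ = μH[2] (A k) := by simp
  have hdisj : (↑(Finset.range m) : Set ℕ).PairwiseDisjoint A := by
    intro k hk j hj hkj
    simp only [Finset.coe_range, Set.mem_Iio] at hk hj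
    rw [Function.onFun, Set.disjoint_left]
    rintro x ⟨w, hw, rfl⟩ ⟨w', hw', hx⟩
    have hbase : ζ ^ j * rootm m w' = ζ ^ k * rootm m w := Fc_inj m hx
    have hww : w' = w := by
      rw [← hGpow j w', ← hGpow k w, hbase]
    rw [hww] at hbase
    have hroot0 : rootm m w ≠ 0 := by
      intro h0
      have h1 := hGpow k w
      rw [h0, mul_zero, zero_pow hm0] at h1
      exact hDne0 w hw h1.symm
    exact hkj (hprim.pow_inj hk hj (mul_right_cancel₀ hroot0 hbase).symm)
  have harith : π / 2 * m * r ^ 2 = m * (π * t ^ 2) := by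
    have h : t ^ 2 = r ^ 2 / 2 := by linarith
    rw [h]; ring
  calc ENNReal.ofReal (π / 2 * m * r ^ 2)
      = ∑ _k ∈ Finset.range m, ENNReal.ofReal (π * t ^ 2) := by
        rw [harith, ENNReal.ofReal_mul (by positivity), ENNReal.ofReal_natCast,
          Finset.sum_const, Finset.card_range, nsmul_eq_mul]
    _ ≤ ∑ k ∈ Finset.range m, μH[2] (A k) := Finset.sum_le_sum fun k _ => hlow k
    _ = μH[2] (⋃ k ∈ Finset.range m, A k) :=
        (measure_biUnion_finset hdisj fun k _ => hmeasA k).symm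
    _ ≤ μH[2] (SigmaCurve m ∩ Metric.closedBall 0 r) :=
        measure_mono (Set.iUnion₂_subset fun k _ => hsubA k)
end
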